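/- Let E be a real normed space, s ⊆ E a convex bounded set with 0 in the interior of s, and F = gauge s (the Minkowski functional of s, a Minkowski norm). Let v ∈ E with F v = 1, and suppose F has Fréchet derivative L : E →L[ℝ] ℝ at v (HasFDerivAt F L v). Then for every y ∈ E, the function t ↦ F (t • v - y) - t tends to -(L y) as t → ∞; that is, the Busemann function of the ray t ↦ t • v (for the quasimetric d x y = F (y - x)) is given by b_v(y) = -(L y), which in coordinates reads b_v(y) = -y^i ∂F/∂y^i(v). -/

import Mathlib

/-- In a real normed space with a Minkowski norm `F = gauge s`
(for `s` convex, bounded, with `0` in its interior), if `F v = 1` and `F` has Fréchet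
derivative `L` at `v`, then the Busemann function of the ray `t ↦ t • v` for
`d x y = F (y - x)` is `b_v(y) = -(L y)`:
`F (t • v - y) - t → -(L y)` as `t → ∞`. -/
theorem busemann_minkowski_gauge
    {E : Type*} [NormedAddCommGroup E] [NormedSpace ℝ E]
    (s : Set E) (hs_conv : Convex ℝ s) (hs_bdd : Bornology.IsBounded s)
    (hs_int : (0 : E) ∈ interior s)
    (v : E) (hv : gauge s v = 1)
    (L : E →L[ℝ] ℝ) (hL : HasFDerivAt (gauge s) L v) :
    ∀ y : E, Filter.Tendsto (fun t : ℝ => gauge s (t • v - y) - t)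
      Filter.atTop (nhds (-(L y))) := by
  intro y
  -- derivative of u ↦ gauge s (v - u • y) at 0 is -(L y)
  have hg : HasDerivAt (fun u : ℝ => v - u • y) (-y) 0 := by
    simpa using ((hasDerivAt_id (0 : ℝ)).smul_const y).const_sub v
  have hcomp : HasDerivAt (fun u : ℝ => gauge s (v - u • y)) (-(L y)) 0 := by
    have hL' : HasFDerivAt (gauge s) L ((fun u : ℝ => v - u • y) 0) := by simpa using hL
    have h := hL'.comp_hasDerivAt 0 hg
    rw [map_neg] at h
    exact h
  have hslope := hasDerivAt_iff_tendsto_slope.mp hcomp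
  have hinv : Filter.Tendsto (fun t : ℝ => t⁻¹) Filter.atTop (nhdsWithin 0 {0}ᶜ) :=
    tendsto_inv_atTop_nhdsGT_zero.mono_right
      (nhdsWithin_mono _ fun x hx => (Set.mem_Ioi.mp hx).ne')
  have htend := hslope.comp hinv
  refine htend.congr' ?_
  filter_upwards [Filter.eventually_gt_atTop (0 : ℝ)] with t ht
  have ht0 : t ≠ 0 := ne_of_gt ht
  have key : gauge s (t • v - y) = t * gauge s (v - t⁻¹ • y) := by
    have : t • v - y = t • (v - t⁻¹ • y) := by
      rw [smul_sub, smul_inv_smul₀ ht0]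
    rw [this, gauge_smul_of_nonneg ht.le]; rfl
  simp only [Function.comp, slope_def_field]
  rw [show (0 : ℝ) • y = 0 by simp, sub_zero, hv, sub_zero, key]
  field_simp
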